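/- Let t ≥ 1 and let λ be a partition with characteristic vector c(λ) = (c_0,…,c_{t−1}) and t-quotient (λ^0,…,λ^{t−1}). Then the conjugate partition λ* has characteristic vector (−c_{t−1},…,−c_0) and t-quotient ((λ^{t−1})*,…,(λ^0)*). -/
import Mathlib


/-- The size of the partition with Frobenius symbol `(L | A)` (arm set `A`, leg set `L`). -/
def frobSize (A L : Finset ℕ) : ℕ := A.card + ∑ a ∈ A, a + ∑ l ∈ L, l

/-- Quotients of the arms of residue `j` mod `t` (positions on runner `j`). -/
def armRunner (t : ℕ) (A : Finset ℕ) (j : ℕ) : Finset ℕ :=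
  (A.filter fun a => a % t = j).image fun a => a / t

/-- Quotients of the legs of residue `t - j - 1` mod `t` (positions on runner `j`). -/
def legRunner (t : ℕ) (L : Finset ℕ) (j : ℕ) : Finset ℕ :=
  (L.filter fun l => l % t = t - j - 1).image fun l => l / t

/-- The `j`-th entry of the characteristic vector of the partition with arm set
`A` and leg set `L`. -/
def charVec (t : ℕ) (A L : Finset ℕ) (j : ℕ) : ℤ :=
  ((armRunner t A j).card : ℤ) - (legRunner t L j).card

/-- The arm set of the `j`-th partition of the `t`-quotient of the partition
with arm set `A` and leg set `L`. -/
def quotArm (t : ℕ) (A L : Finset ℕ) (j : ℕ) : Finset ℕ :=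
  let c := charVec t A L j
  if 0 ≤ c then
    ((armRunner t A j).filter fun a => c.toNat ≤ a).image fun a => a - c.toNat
  else
    ((armRunner t A j).image fun a => a + (-c).toNat) ∪
      ((Finset.range (-c).toNat \ legRunner t L j).image fun a => (-c).toNat - a - 1)

/-- The leg set of the `j`-th partition of the `t`-quotient of the partition
with arm set `A` and leg set `L`. -/
def quotLeg (t : ℕ) (A L : Finset ℕ) (j : ℕ) : Finset ℕ :=
  let c := charVec t A L j
  if c ≤ 0 then
    ((legRunner t L j).filter fun l => (-c).toNat ≤ l).image fun l => l - (-c).toNat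
  else
    ((legRunner t L j).image fun l => l + c.toNat) ∪
      ((Finset.range c.toNat \ armRunner t A j).image fun l => c.toNat - l - 1)

/-- The arm set of the `t`-core of the partition with arm set `A`, leg set `L`. -/
def coreArm (t : ℕ) (A L : Finset ℕ) : Finset ℕ :=
  (Finset.range t).biUnion fun j =>
    (Finset.range (charVec t A L j).toNat).image fun q => q * t + j

/-- The leg set of the `t`-core of the partition with arm set `A`, leg set `L`. -/
def coreLeg (t : ℕ) (A L : Finset ℕ) : Finset ℕ :=
  (Finset.range t).biUnion fun j =>
    (Finset.range (-(charVec t A L j)).toNat).image fun q => q * t + (t - j - 1)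

/-- Let `t ≥ 1` and let `λ` be a partition with arm set `A` and leg
set `L` (so its conjugate `λ*` has arm set `L` and leg set `A`). If `λ` has
characteristic vector `(c_0, …, c_{t-1})` and `t`-quotient `(λ^0, …, λ^{t-1})`,
then `λ*` has characteristic vector `(-c_{t-1}, …, -c_0)` and `t`-quotient
`((λ^{t-1})*, …, (λ^0)*)`. -/
lemma legRunner_eq_armRunner (t : ℕ) (X : Finset ℕ) (j : ℕ) :
    legRunner t X j = armRunner t X (t - 1 - j) := by
  have h : t - j - 1 = t - 1 - j := by omega
  rw [legRunner, armRunner, h]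

lemma armRunner_eq_legRunner (t : ℕ) (X : Finset ℕ) (j : ℕ) (hj : j < t) :
    armRunner t X j = legRunner t X (t - 1 - j) := by
  have h : t - (t - 1 - j) - 1 = j := by omega
  rw [legRunner, armRunner, h]

lemma charVec_conj (t : ℕ) (A L : Finset ℕ) (j : ℕ) (hj : j < t) :
    charVec t L A j = -(charVec t A L (t - 1 - j)) := by
  rw [charVec, charVec, armRunner_eq_legRunner t L j hj, legRunner_eq_armRunner t A j]
  ring

theorem conjugate_charVec_and_quotient
    (t : ℕ) (ht : 0 < t) (A L : Finset ℕ) (hcard : A.card = L.card)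
    (j : ℕ) (hj : j < t) :
    charVec t L A j = -(charVec t A L (t - 1 - j))
    ∧ quotArm t L A j = quotLeg t A L (t - 1 - j)
    ∧ quotLeg t L A j = quotArm t A L (t - 1 - j) := by
  have hc := charVec_conj t A L j hj
  have ha := armRunner_eq_legRunner t L j hj
  have ha' := armRunner_eq_legRunner t A j hj
  have hl := legRunner_eq_armRunner t A j
  have hl' := legRunner_eq_armRunner t L j
  refine ⟨hc, ?_, ?_⟩
  · rw [quotArm, quotLeg, hc, ha, hl]
    simp only [neg_neg, neg_nonneg]
  · rw [quotLeg, quotArm, hc, ha, hl]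
    simp only [neg_neg, neg_nonpos]
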